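/- arXiv:2408.15832 — 3 statements merged into one kernel-verified Lean document; each statement's English description precedes it below -/
import Mathlib

section
/- Let H be a self-adjoint operator on a finite-dimensional Hilbert space with maximal eigenvalue degeneracy D_E, and suppose H has an orthonormal eigenbasis (φ_k) with ⟨φ_k, P φ_k⟩ ≤ ε for all k, where P is an orthogonal projection. Then every normalized eigenvector φ of H satisfies ⟨φ, P φ⟩ ≤ ε D_E. -/
open scoped InnerProductSpace

/-- If a self-adjoint operator `H₀` on `ℂ^D` has all eigenspace dimensions at most `D_E`
and possesses an orthonormal eigenbasis `(φ_k)` with `⟪φ_k, P φ_k⟫ ≤ ε` for an orthogonal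
projection `P`, then every normalized eigenvector `φ` of `H₀` satisfies
`⟪φ, P φ⟫ ≤ ε * D_E`. -/
theorem eigenvector_projection_bound (D : ℕ) (DE : ℕ) (ε : ℝ)
    (H₀ : EuclideanSpace ℂ (Fin D) →ₗ[ℂ] EuclideanSpace ℂ (Fin D))
    (hH₀ : H₀.IsSymmetric)
    (hdeg : ∀ e : ℂ, Module.finrank ℂ (Module.End.eigenspace H₀ e) ≤ DE)
    (P : EuclideanSpace ℂ (Fin D) →ₗ[ℂ] EuclideanSpace ℂ (Fin D))
    (hP : P.IsSymmetric) (hP2 : P ∘ₗ P = P)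
    (b : OrthonormalBasis (Fin D) ℂ (EuclideanSpace ℂ (Fin D)))
    (heig : ∀ k : Fin D, ∃ e : ℂ, H₀ (b k) = e • b k)
    (hε : ∀ k : Fin D, (⟪b k, P (b k)⟫_ℂ).re ≤ ε) :
    ∀ (φ : EuclideanSpace ℂ (Fin D)) (e : ℂ), ‖φ‖ = 1 → H₀ φ = e • φ →
      (⟪φ, P φ⟫_ℂ).re ≤ ε * DE := by
  intro φ e hφ hφe
  -- D = 0 is impossible
  rcases Nat.eq_zero_or_pos D with hD | hD
  · subst hD
    have : φ = 0 := Subsingleton.elim _ _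
    rw [this, norm_zero] at hφ
    norm_num at hφ
  -- P is idempotent pointwise
  have hP2' : ∀ x, P (P x) = P x := fun x => congrFun (congrArg (fun f => f.toFun) hP2) x
  -- ‖P x‖² = re ⟪x, P x⟫
  have hPnorm : ∀ x : EuclideanSpace ℂ (Fin D), ‖P x‖ ^ 2 = (⟪x, P x⟫_ℂ).re := by
    intro x
    have h1 : (⟪P x, P x⟫_ℂ) = ⟪x, P x⟫_ℂ := by
      rw [hP x (P x), hP2']
    have h2 := inner_self_eq_norm_sq (𝕜 := ℂ) (P x)
    rw [h1] at h2
    exact h2.symm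
  -- ε ≥ 0
  have hε0 : 0 ≤ ε := by
    have k : Fin D := ⟨0, hD⟩
    calc (0:ℝ) ≤ ‖P (b k)‖ ^ 2 := sq_nonneg _
    _ = (⟪b k, P (b k)⟫_ℂ).re := hPnorm _
    _ ≤ ε := hε k
  choose ev hev using heig
  -- eigenvalues are real
  have hevreal : ∀ k, (starRingEnd ℂ) (ev k) = ev k := by
    intro k
    have hbk : b k ≠ 0 := by
      intro h
      have := b.orthonormal.1 k
      rw [h, norm_zero] at this; norm_num at this
    have hvec : Module.End.HasEigenvector H₀ (ev k) (b k) :=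
      ⟨Module.End.mem_eigenspace_iff.mpr (hev k), hbk⟩
    exact hH₀.conj_eigenvalue_eq_self (Module.End.hasEigenvalue_of_hasEigenvector hvec)
  -- coefficients
  set c : Fin D → ℂ := fun k => ⟪b k, φ⟫_ℂ with hc
  -- vanishing off the eigenspace
  have hvan : ∀ k, ev k ≠ e → c k = 0 := by
    intro k hk
    have h1 : ⟪b k, H₀ φ⟫_ℂ = e * c k := by rw [hφe, inner_smul_right]
    have h2 : ⟪b k, H₀ φ⟫_ℂ = ev k * c k := by
      rw [← hH₀ (b k) φ, hev k, inner_smul_left, hevreal k]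
    have : (ev k - e) * c k = 0 := by linear_combination h2.symm.trans h1
    rcases mul_eq_zero.mp this with h | h
    · exact absurd (sub_eq_zero.mp h) hk
    · exact h
  set S : Finset (Fin D) := Finset.univ.filter (fun k => ev k = e) with hS
  -- card bound
  have hcard : (S.card : ℝ) ≤ (DE : ℝ) := by
    have hmem : ∀ k : S, (b k : EuclideanSpace ℂ (Fin D)) ∈ Module.End.eigenspace H₀ e := by
      rintro ⟨k, hk⟩
      rw [Module.End.mem_eigenspace_iff]
      have : ev k = e := (Finset.mem_filter.mp hk).2
      rw [← this]; exact hev k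
    have hli : LinearIndependent ℂ (fun k : S => (⟨b k, hmem k⟩ : Module.End.eigenspace H₀ e)) := by
      apply LinearIndependent.of_comp (Module.End.eigenspace H₀ e).subtype
      exact (b.orthonormal.linearIndependent).comp _ Subtype.val_injective
    have := hli.fintype_card_le_finrank
    have h2 := hdeg e
    exact_mod_cast (Fintype.card_coe S ▸ this).trans h2
  -- decompose P φ
  have hrepr : φ = ∑ k, c k • b k := (b.sum_repr' φ).symm
  have hPφ : P φ = ∑ k ∈ S, c k • P (b k) := by
    conv_lhs => rw [hrepr]
    rw [map_sum]
    rw [← Finset.sum_subset (Finset.subset_univ S)]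
    · exact Finset.sum_congr rfl fun k _ => by rw [map_smul]
    · intro k _ hk
      have : c k = 0 := hvan k (by simpa [hS] using hk)
      simp [this]
  -- sum of squared coefficients = 1
  have hsumc : ∑ k, ‖c k‖ ^ 2 = 1 := by
    have h := b.sum_inner_mul_inner φ φ
    have : ∀ k, ⟪φ, b k⟫_ℂ * ⟪b k, φ⟫_ℂ = (‖c k‖ ^ 2 : ℝ) := by
      intro k
      rw [← inner_conj_symm (b k) φ, mul_comm, mul_comm ((starRingEnd ℂ) _) _,
        Complex.mul_conj]
      norm_cast
      rw [hc, Complex.normSq_eq_norm_sq, norm_inner_symm φ (b k)]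
    rw [Finset.sum_congr rfl (fun k _ => this k)] at h
    have h2 : (⟪φ, φ⟫_ℂ) = 1 := by
      rw [inner_self_eq_norm_sq_to_K (𝕜 := ℂ) φ, hφ]; norm_num
    rw [h2] at h
    exact_mod_cast h
  -- Cauchy–Schwarz bound
  have hnormle : ‖P φ‖ ≤ ∑ k ∈ S, ‖c k‖ * ‖P (b k)‖ := by
    rw [hPφ]
    refine (norm_sum_le _ _).trans ?_
    exact le_of_eq (Finset.sum_congr rfl fun k _ => norm_smul _ _)
  have hsq : ‖P φ‖ ^ 2 ≤ (∑ k ∈ S, ‖c k‖ ^ 2) * ∑ k ∈ S, ‖P (b k)‖ ^ 2 := by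
    refine le_trans ?_ (Finset.sum_mul_sq_le_sq_mul_sq S _ _)
    exact pow_le_pow_left₀ (norm_nonneg _) hnormle 2
  have hc1 : ∑ k ∈ S, ‖c k‖ ^ 2 ≤ 1 := by
    rw [← hsumc]
    exact Finset.sum_le_sum_of_subset_of_nonneg (Finset.subset_univ S)
      (fun k _ _ => sq_nonneg _)
  have hPb : ∑ k ∈ S, ‖P (b k)‖ ^ 2 ≤ ε * S.card := by
    calc ∑ k ∈ S, ‖P (b k)‖ ^ 2 ≤ ∑ k ∈ S, ε := by
          refine Finset.sum_le_sum fun k _ => ?_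
          rw [hPnorm]; exact hε k
    _ = ε * S.card := by rw [Finset.sum_const, nsmul_eq_mul, mul_comm]
  calc (⟪φ, P φ⟫_ℂ).re = ‖P φ‖ ^ 2 := (hPnorm φ).symm
  _ ≤ (∑ k ∈ S, ‖c k‖ ^ 2) * ∑ k ∈ S, ‖P (b k)‖ ^ 2 := hsq
  _ ≤ 1 * (ε * S.card) := by
      refine mul_le_mul hc1 hPb ?_ zero_le_one
      exact Finset.sum_nonneg fun k _ => sq_nonneg _
  _ = ε * S.card := one_mul _
  _ ≤ ε * DE := by exact mul_le_mul_of_nonneg_left hcard hε0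
end

section
/- Let H be a self-adjoint operator on a D-dimensional Hilbert space with spectral projections Π_e, let P be an orthogonal projection with ⟨φ, Π_e P Π_e φ⟩ ≤ εδ ‖Π_e φ‖² for every eigenvalue e and every vector φ. Then for every unit vector ψ₀, the time average over [0,T] of ⟨ψ_t, P ψ_t⟩ (with ψ_t = e^{-iHt} ψ₀) converges as T → ∞ to Σ_e ⟨ψ₀, Π_e P Π_e ψ₀⟩, which is at most εδ. -/
open scoped InnerProductSpace
open MeasureTheory Filter

set_option synthInstance.maxHeartbeats 1000000
set_option maxHeartbeats 4000000

private lemma pow_spectral {D : ℕ}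
    (ℰ : Finset ℝ) (Pr : ℝ → (EuclideanSpace ℂ (Fin D) →L[ℂ] EuclideanSpace ℂ (Fin D)))
    (hPridem : ∀ e ∈ ℰ, Pr e * Pr e = Pr e)
    (hProrth : ∀ e ∈ ℰ, ∀ e' ∈ ℰ, e ≠ e' → Pr e * Pr e' = 0)
    (hPrsum : ∑ e ∈ ℰ, Pr e = 1) (c : ℝ → ℂ) (n : ℕ) :
    (∑ e ∈ ℰ, c e • Pr e) ^ n = ∑ e ∈ ℰ, (c e) ^ n • Pr e := by
  induction n with
  | zero => simp [hPrsum]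
  | succ n ih =>
    rw [pow_succ, ih, Finset.sum_mul_sum]
    refine Finset.sum_congr rfl fun e he => ?_
    rw [Finset.sum_eq_single e (fun e' he' hne => ?_) (fun h => absurd he h)]
    · rw [smul_mul_smul_comm, hPridem e he, ← pow_succ]
    · rw [smul_mul_smul_comm, hProrth e he e' he' (Ne.symm hne)]; ext x; simp

private lemma exp_spectral {D : ℕ}
    (ℰ : Finset ℝ) (Pr : ℝ → (EuclideanSpace ℂ (Fin D) →L[ℂ] EuclideanSpace ℂ (Fin D)))
    (hPridem : ∀ e ∈ ℰ, Pr e * Pr e = Pr e)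
    (hProrth : ∀ e ∈ ℰ, ∀ e' ∈ ℰ, e ≠ e' → Pr e * Pr e' = 0)
    (hPrsum : ∑ e ∈ ℰ, Pr e = 1) (c : ℝ → ℂ) :
    NormedSpace.exp (∑ e ∈ ℰ, c e • Pr e) = ∑ e ∈ ℰ, Complex.exp (c e) • Pr e := by
  rw [NormedSpace.exp_eq_tsum (𝕂 := ℂ)]
  have h1 : ∀ n : ℕ, ((n.factorial : ℂ)⁻¹ • (∑ e ∈ ℰ, c e • Pr e) ^ n)
      = ∑ e ∈ ℰ, ((n.factorial : ℂ)⁻¹ • (c e) ^ n) • Pr e := by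
    intro n
    rw [pow_spectral ℰ Pr hPridem hProrth hPrsum c n, Finset.smul_sum]
    exact Finset.sum_congr rfl fun e _ => (smul_smul _ _ _)
  simp only [h1]
  rw [Summable.tsum_finsetSum (fun e _ => ((NormedSpace.expSeries_summable' (𝕂 := ℂ) (c e)).smul_const (Pr e)))]
  refine Finset.sum_congr rfl fun e _ => ?_
  rw [Summable.tsum_smul_const (NormedSpace.expSeries_summable' (𝕂 := ℂ) (c e))]
  rw [Complex.exp_eq_exp_ℂ, NormedSpace.exp_eq_tsum (𝕂 := ℂ)]

/-- For a Hermitian `H` with spectral decomposition `H = Σ_e e • Pr_e` and an orthogonal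
projection `P` satisfying `⟪φ, Pr_e P Pr_e φ⟫ ≤ εδ ‖Pr_e φ‖²` for all `e` and `φ`, the time
average over `[0,T]` of `⟪ψ_t, P ψ_t⟫` (with `ψ_t = e^{-iHt} ψ₀`, `ψ₀` a unit vector)
converges as `T → ∞` to `Σ_e ⟪ψ₀, Pr_e P Pr_e ψ₀⟫`, which is at most `εδ`. -/
theorem time_average_ETH (D : ℕ) (ε δ : ℝ) (hε : 0 < ε) (hδ : 0 < δ)
    (ℰ : Finset ℝ)
    (Pr : ℝ → (EuclideanSpace ℂ (Fin D) →L[ℂ] EuclideanSpace ℂ (Fin D)))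
    (hPrsa : ∀ e ∈ ℰ, IsSelfAdjoint (Pr e))
    (hPridem : ∀ e ∈ ℰ, Pr e * Pr e = Pr e)
    (hProrth : ∀ e ∈ ℰ, ∀ e' ∈ ℰ, e ≠ e' → Pr e * Pr e' = 0)
    (hPrsum : ∑ e ∈ ℰ, Pr e = 1)
    (H : EuclideanSpace ℂ (Fin D) →L[ℂ] EuclideanSpace ℂ (Fin D))
    (hH : H = ∑ e ∈ ℰ, (e : ℂ) • Pr e)
    (P : EuclideanSpace ℂ (Fin D) →L[ℂ] EuclideanSpace ℂ (Fin D))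
    (hPsa : IsSelfAdjoint P) (hPidem : P * P = P)
    (hbound : ∀ e ∈ ℰ, ∀ φ : EuclideanSpace ℂ (Fin D),
      (⟪φ, (Pr e * P * Pr e) φ⟫_ℂ).re ≤ ε * δ * ‖Pr e φ‖ ^ 2)
    (ψ₀ : EuclideanSpace ℂ (Fin D)) (hψ₀ : ‖ψ₀‖ = 1) :
    Tendsto
      (fun T : ℝ => T⁻¹ * ∫ t in (0:ℝ)..T,
        (⟪NormedSpace.exp ((-(t : ℂ) * Complex.I) • H) ψ₀,
          P (NormedSpace.exp ((-(t : ℂ) * Complex.I) • H) ψ₀)⟫_ℂ).re)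
      atTop
      (nhds (∑ e ∈ ℰ, (⟪ψ₀, (Pr e * P * Pr e) ψ₀⟫_ℂ).re)) ∧
    (∑ e ∈ ℰ, (⟪ψ₀, (Pr e * P * Pr e) ψ₀⟫_ℂ).re) ≤ ε * δ := by
  classical
  set c : ℝ → ℝ → ℂ := fun e e' => ⟪Pr e ψ₀, P (Pr e' ψ₀)⟫_ℂ with hcdef
  have hPrdag : ∀ e ∈ ℰ, ContinuousLinearMap.adjoint (Pr e) = Pr e := fun e he => by
    rw [← ContinuousLinearMap.star_eq_adjoint]; exact hPrsa e he
  have hmove : ∀ e ∈ ℰ, ∀ x y : EuclideanSpace ℂ (Fin D),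
      ⟪Pr e x, y⟫_ℂ = ⟪x, (Pr e) y⟫_ℂ := by
    intro e he x y
    conv_lhs => rw [← hPrdag e he]
    exact ContinuousLinearMap.adjoint_inner_left _ _ _
  have hinner : ∀ e ∈ ℰ, ⟪ψ₀, (Pr e * P * Pr e) ψ₀⟫_ℂ = c e e := by
    intro e he
    rw [ContinuousLinearMap.mul_apply, ContinuousLinearMap.mul_apply, ← hmove e he]
  -- norms sum to one
  have hnorm : ∑ e ∈ ℰ, ‖Pr e ψ₀‖ ^ 2 = 1 := by
    have h1 : ∀ e ∈ ℰ, (‖Pr e ψ₀‖ ^ 2 : ℝ) = (⟪ψ₀, Pr e ψ₀⟫_ℂ).re := by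
      intro e he
      have h2 : Pr e (Pr e ψ₀) = Pr e ψ₀ := by
        rw [← ContinuousLinearMap.mul_apply, hPridem e he]
      rw [show ⟪ψ₀, Pr e ψ₀⟫_ℂ = ⟪Pr e ψ₀, Pr e ψ₀⟫_ℂ by rw [← h2, ← hmove e he, h2],
        inner_self_eq_norm_sq_to_K (𝕜 := ℂ)]
      norm_cast
    rw [Finset.sum_congr rfl h1, ← Complex.re_sum, ← inner_sum]
    have h3 : ∑ e ∈ ℰ, Pr e ψ₀ = ψ₀ := by
      rw [← ContinuousLinearMap.sum_apply, hPrsum, ContinuousLinearMap.one_apply]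
    rw [h3, inner_self_eq_norm_sq_to_K (𝕜 := ℂ) ψ₀, hψ₀]
    norm_num
  have part2 : (∑ e ∈ ℰ, (⟪ψ₀, (Pr e * P * Pr e) ψ₀⟫_ℂ).re) ≤ ε * δ := by
    calc ∑ e ∈ ℰ, (⟪ψ₀, (Pr e * P * Pr e) ψ₀⟫_ℂ).re
        ≤ ∑ e ∈ ℰ, ε * δ * ‖Pr e ψ₀‖ ^ 2 := Finset.sum_le_sum fun e he => hbound e he ψ₀
      _ = ε * δ := by rw [← Finset.mul_sum, hnorm, mul_one]
  refine ⟨?_, part2⟩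
  -- the exponential
  have hpsi : ∀ t : ℝ, NormedSpace.exp ((-(t : ℂ) * Complex.I) • H)
      = ∑ e ∈ ℰ, Complex.exp (-(t : ℂ) * Complex.I * e) • Pr e := by
    intro t
    rw [hH, Finset.smul_sum]
    rw [Finset.sum_congr rfl (fun e _ => by rw [smul_smul])]
    exact exp_spectral ℰ Pr hPridem hProrth hPrsum _
  -- the integrand as a finite sum
  have hf : ∀ t : ℝ,
      (⟪NormedSpace.exp ((-(t : ℂ) * Complex.I) • H) ψ₀,
          P (NormedSpace.exp ((-(t : ℂ) * Complex.I) • H) ψ₀)⟫_ℂ).re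
      = ∑ p ∈ ℰ ×ˢ ℰ, (Complex.exp (((p.1 : ℂ) - (p.2 : ℂ)) * Complex.I * t) * c p.1 p.2).re := by
    intro t
    rw [hpsi t, Finset.sum_product_right]
    simp only [ContinuousLinearMap.sum_apply, ContinuousLinearMap.smul_apply, map_sum,
      _root_.map_smul, sum_inner, inner_sum, inner_smul_left, inner_smul_right,
      Finset.mul_sum, Complex.re_sum]
    refine Finset.sum_congr rfl fun e' _ => Finset.sum_congr rfl fun e _ => ?_
    congr 1
    have hconj : (starRingEnd ℂ) (Complex.exp (-(t : ℂ) * Complex.I * e))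
        = Complex.exp ((t : ℂ) * Complex.I * e) := by
      rw [← Complex.exp_conj]
      congr 1
      simp [map_mul, Complex.conj_ofReal]
    rw [hconj, ← mul_assoc, ← Complex.exp_add]
    congr 1
    ring
  -- per-pair limits
  have key : ∀ p ∈ ℰ ×ˢ ℰ, Tendsto (fun T : ℝ => T⁻¹ * ∫ t in (0:ℝ)..T,
      (Complex.exp (((p.1 : ℂ) - (p.2 : ℂ)) * Complex.I * t) * c p.1 p.2).re) atTop
      (nhds (if p.1 = p.2 then (c p.1 p.2).re else 0)) := by
    rintro ⟨e, e'⟩ hp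
    by_cases hee : e = e'
    · subst hee
      rw [if_pos rfl]
      have heq : ∀ᶠ T in atTop, T⁻¹ * (∫ t in (0:ℝ)..T,
          (Complex.exp (((e : ℂ) - (e : ℂ)) * Complex.I * t) * c e e).re) = (c e e).re := by
        filter_upwards [eventually_gt_atTop (0:ℝ)] with T hT
        simp only [sub_self, zero_mul, Complex.exp_zero, one_mul,
          intervalIntegral.integral_const, sub_zero, smul_eq_mul]
        rw [← mul_assoc, inv_mul_cancel₀ hT.ne', one_mul]
      exact Tendsto.congr' (heq.mono fun T h => h.symm) tendsto_const_nhds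
    · rw [if_neg hee]
      set a : ℂ := ((e : ℂ) - (e' : ℂ)) * Complex.I with hadef
      have ha : a ≠ 0 := by
        apply mul_ne_zero _ Complex.I_ne_zero
        rw [sub_ne_zero]
        exact_mod_cast hee
      have hcont : Continuous fun t : ℝ => Complex.exp (a * t) * c e e' := by fun_prop
      have hint : ∀ T : ℝ, (∫ t in (0:ℝ)..T, (Complex.exp (a * t) * c e e').re)
          = (((Complex.exp (a * T) - 1) / a) * c e e').re := by
        intro T
        calc ∫ t in (0:ℝ)..T, (Complex.exp (a * t) * c e e').re
            = (∫ t in (0:ℝ)..T, Complex.exp (a * t) * c e e').re := by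
              exact Complex.reCLM.intervalIntegral_comp_comm (hcont.intervalIntegrable 0 T)
          _ = (((Complex.exp (a * T) - 1) / a) * c e e').re := by
              rw [intervalIntegral.integral_mul_const, integral_exp_mul_complex ha]
              norm_num
      have hbnd : ∀ᶠ T in atTop, ‖T⁻¹ * ∫ t in (0:ℝ)..T,
          (Complex.exp (a * t) * c e e').re‖ ≤ (2 / ‖a‖ * ‖c e e'‖) * T⁻¹ := by
        filter_upwards [eventually_gt_atTop (0:ℝ)] with T hT
        have hTn : ‖T⁻¹‖ = T⁻¹ := by rw [Real.norm_eq_abs, abs_of_pos (by positivity)]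
        rw [hint T, norm_mul, hTn, mul_comm]
        apply mul_le_mul_of_nonneg_right _ (by positivity)
        have hexp : ‖Complex.exp (a * T)‖ = 1 := by
          rw [Complex.norm_exp]
          have : (a * (T : ℂ)).re = 0 := by
            rw [hadef]
            simp [Complex.mul_re]
          rw [this, Real.exp_zero]
        calc ‖(((Complex.exp (a * T) - 1) / a) * c e e').re‖
            ≤ ‖((Complex.exp (a * T) - 1) / a) * c e e'‖ := by
              rw [Real.norm_eq_abs]
              exact Complex.abs_re_le_norm _
          _ = ‖Complex.exp (a * T) - 1‖ / ‖a‖ * ‖c e e'‖ := by rw [norm_mul, norm_div]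
          _ ≤ 2 / ‖a‖ * ‖c e e'‖ := by
              gcongr
              calc ‖Complex.exp (a * T) - 1‖ ≤ ‖Complex.exp (a * T)‖ + ‖(1:ℂ)‖ :=
                    norm_sub_le _ _
                _ = 2 := by rw [hexp, norm_one]; norm_num
      have hz : Tendsto (fun T : ℝ => (2 / ‖a‖ * ‖c e e'‖) * T⁻¹) atTop (nhds 0) := by
        simpa using (tendsto_inv_atTop_zero (𝕜 := ℝ)).const_mul (2 / ‖a‖ * ‖c e e'‖)
      exact squeeze_zero_norm' hbnd hz
  have hsum := tendsto_finset_sum (ℰ ×ˢ ℰ) key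
  have hLsum : (∑ p ∈ ℰ ×ˢ ℰ, if p.1 = p.2 then (c p.1 p.2).re else 0)
      = ∑ e ∈ ℰ, (⟪ψ₀, (Pr e * P * Pr e) ψ₀⟫_ℂ).re := by
    rw [Finset.sum_product]
    refine Finset.sum_congr rfl fun e he => ?_
    rw [Finset.sum_ite_eq ℰ e (fun e' => (c e e').re), if_pos he, hinner e he]
  rw [← hLsum]
  have hcre : ∀ (x y : ℂ), Continuous fun t : ℝ => (Complex.exp (x * t) * y).re := by
    intro x y; fun_prop
  apply Tendsto.congr' _ hsum
  filter_upwards with T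
  simp only [hf]
  rw [intervalIntegral.integral_finset_sum
    (fun p _ => ((hcre (((p.1 : ℂ) - (p.2 : ℂ)) * Complex.I) (c p.1 p.2)).intervalIntegrable 0 T)),
    Finset.mul_sum]
end

section
/- For the free Fermi gas eigenstate Ψ_k with distinct momenta and any λ ∈ (0,1], ⟨Ψ_k, e^{λ N_Γ} Ψ_k⟩ ≤ (μ e^λ + (1−μ))^N, where μ = |Γ|/|Λ|. -/
open scoped InnerProductSpace Real

/-- `k·x` for a momentum `k ∈ ℝ^d` and a lattice site `x ∈ {1,…,L}^d`. -/
def kdot (d L : ℕ) (k : Fin d → ℝ) (x : Fin d → Fin L) : ℝ :=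
  ∑ a : Fin d, k a * ((x a : ℕ) + 1)

/-- The creation operator `a†_k := L^{-d/2} Σ_{x∈Λ} e^{ik·x} c†_x`. -/
noncomputable def adagL (d L : ℕ) {H : Type*} [NormedAddCommGroup H]
    [InnerProductSpace ℂ H] (cd : (Fin d → Fin L) → (H →L[ℂ] H)) (k : Fin d → ℝ) :
    H →L[ℂ] H :=
  ((Real.sqrt ((L : ℝ) ^ d) : ℂ))⁻¹ •
    ∑ x : Fin d → Fin L, Complex.exp (Complex.I * kdot d L k x) • cd x

/-- Membership in the discrete momentum lattice `𝒦`. -/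
def inMomentumLattice (d L : ℕ) (k : Fin d → ℝ) : Prop :=
  ∀ a : Fin d, (∃ ν : ℤ, k a = 2 * π * ν / L) ∧ -π < k a ∧ k a ≤ π


section ExpAux

variable {A : Type*} [NormedRing A] [NormedAlgebra ℂ A] [CompleteSpace A]

lemma exp_smul_one' (s : ℂ) : NormedSpace.exp (s • (1:A)) = Complex.exp s • (1:A) := by
  rw [NormedSpace.exp_eq_tsum ℂ]
  have h1 : ∀ n : ℕ, ((n.factorial : ℂ)⁻¹) • (s • (1:A)) ^ n = ((n.factorial : ℂ)⁻¹ * s ^ n) • (1:A) := by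
    intro n
    rw [smul_pow, one_pow, smul_smul]
  simp_rw [h1]
  rw [Summable.tsum_smul_const]
  · congr 1
    rw [Complex.exp_eq_exp_ℂ, NormedSpace.exp_eq_tsum ℂ]
    exact tsum_congr fun n => by rw [smul_eq_mul]
  · have := NormedSpace.expSeries_summable' (𝕂 := ℂ) (x := s)
    simpa [smul_eq_mul] using this

lemma exp_conj_shift {a b : A} (s : ℂ) (h : a * b = b * (a + s • 1)) :
    NormedSpace.exp a * b = Complex.exp s • (b * NormedSpace.exp a) := by
  have hpow : ∀ n : ℕ, a ^ n * b = b * (a + s • 1) ^ n := by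
    intro n
    induction n with
    | zero => simp
    | succ n ih =>
      rw [pow_succ, pow_succ, mul_assoc, h, ← mul_assoc, ih, mul_assoc]
  have hcomm : Commute a (s • (1:A)) := by
    exact Commute.smul_right (Commute.one_right a) s
  have hexp : NormedSpace.exp (a + s • 1)
      = Complex.exp s • NormedSpace.exp a := by
    rw [NormedSpace.exp_add_of_commute_of_mem_ball (𝕂 := ℂ) hcomm
        ((NormedSpace.expSeries_radius_eq_top ℂ A).symm ▸ edist_lt_top _ _)
        ((NormedSpace.expSeries_radius_eq_top ℂ A).symm ▸ edist_lt_top _ _), exp_smul_one', mul_smul_comm, mul_one]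
  calc NormedSpace.exp a * b
      = (∑' n : ℕ, ((n.factorial : ℂ)⁻¹) • a ^ n) * b := by rw [NormedSpace.exp_eq_tsum ℂ]
    _ = ∑' n : ℕ, (((n.factorial : ℂ)⁻¹) • a ^ n) * b := by
        rw [(NormedSpace.expSeries_summable' (𝕂 := ℂ) a).tsum_mul_right]
    _ = ∑' n : ℕ, b * (((n.factorial : ℂ)⁻¹) • (a + s • 1) ^ n) := by
        refine tsum_congr fun n => ?_
        rw [smul_mul_assoc, hpow, mul_smul_comm]
    _ = b * ∑' n : ℕ, ((n.factorial : ℂ)⁻¹) • (a + s • 1) ^ n := by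
        rw [(NormedSpace.expSeries_summable' (𝕂 := ℂ) (a + s • 1)).tsum_mul_left]
    _ = b * NormedSpace.exp (a + s • 1) := by rw [NormedSpace.exp_eq_tsum ℂ]
    _ = Complex.exp s • (b * NormedSpace.exp a) := by rw [hexp, mul_smul_comm]

lemma exp_conj_ofFn {N : ℕ} (E : A) (f g : Fin N → A) (h : ∀ j, E * f j = g j * E) :
    E * (List.ofFn f).prod = (List.ofFn g).prod * E := by
  induction N with
  | zero => simp
  | succ n ih =>
    rw [List.ofFn_succ, List.ofFn_succ, List.prod_cons, List.prod_cons,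
      ← mul_assoc, h 0, mul_assoc, ih _ _ (fun j => h j.succ), ← mul_assoc]

end ExpAux

section VecAux

variable {H : Type*} [NormedAddCommGroup H] [InnerProductSpace ℂ H] [CompleteSpace H]

lemma exp_apply_eq_self (T : H →L[ℂ] H) (v : H) (h : T v = 0) :
    NormedSpace.exp T v = v := by
  have hs := NormedSpace.expSeries_summable' (𝕂 := ℂ) T
  have := (ContinuousLinearMap.apply ℂ H v).map_tsum hs
  rw [NormedSpace.exp_eq_tsum ℂ]
  simp only [ContinuousLinearMap.apply_apply] at this
  rw [this]
  have h0 : ∀ n : ℕ, (((n.factorial : ℂ)⁻¹) • T ^ n) v = if n = 0 then v else 0 := by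
    intro n
    cases n with
    | zero => simp
    | succ m =>
      simp only [Nat.succ_ne_zero, if_false, ContinuousLinearMap.smul_apply]
      rw [pow_succ, ContinuousLinearMap.mul_apply, h, map_zero, smul_zero]
  calc (∑' n : ℕ, (((n.factorial : ℂ)⁻¹) • T ^ n) v) = ∑' n : ℕ, if n = 0 then v else 0 := by
        exact tsum_congr h0
    _ = v := by rw [tsum_eq_single 0 (fun b hb => by simp [hb])]; simp

lemma prod_norm_sq_le {M : ℝ} (hM : 0 ≤ M) (bs : List (H →L[ℂ] H))
    (hb : ∀ b ∈ bs, ∀ φ : H, ‖b φ‖ ^ 2 ≤ M * ‖φ‖ ^ 2) (v : H) :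
    ‖bs.prod v‖ ^ 2 ≤ M ^ bs.length * ‖v‖ ^ 2 := by
  induction bs with
  | nil => simp
  | cons b bs ih =>
    have h1 : ‖(b :: bs).prod v‖ ^ 2 ≤ M * ‖bs.prod v‖ ^ 2 := by
      rw [List.prod_cons, ContinuousLinearMap.mul_apply]
      exact hb b (List.mem_cons_self) _
    have h2 := ih (fun b' hb' => hb b' (List.mem_cons_of_mem _ hb'))
    calc ‖(b :: bs).prod v‖ ^ 2 ≤ M * ‖bs.prod v‖ ^ 2 := h1
      _ ≤ M * (M ^ bs.length * ‖v‖ ^ 2) := by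
          exact mul_le_mul_of_nonneg_left h2 hM
      _ = M ^ (b :: bs).length * ‖v‖ ^ 2 := by
          rw [List.length_cons, pow_succ]; ring

end VecAux

section Fermi

variable {d L : ℕ} {H : Type*} [NormedAddCommGroup H] [InnerProductSpace ℂ H]
  [CompleteSpace H]

/-- site weight for the transformed creation operator -/
noncomputable def wgt (d L : ℕ) (Γ : Finset (Fin d → Fin L)) (t : ℝ) (k : Fin d → ℝ)
    (x : Fin d → Fin L) : ℂ :=
  Complex.exp (Complex.I * kdot d L k x + ((t * (if x ∈ Γ then (1:ℝ) else 0) : ℝ) : ℂ))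

noncomputable def bdagL (d L : ℕ) (cd : (Fin d → Fin L) → (H →L[ℂ] H))
    (Γ : Finset (Fin d → Fin L)) (t : ℝ) (k : Fin d → ℝ) : H →L[ℂ] H :=
  ((Real.sqrt ((L : ℝ) ^ d) : ℂ))⁻¹ • ∑ x : Fin d → Fin L, wgt d L Γ t k x • cd x

noncomputable def bL (d L : ℕ) (c : (Fin d → Fin L) → (H →L[ℂ] H))
    (Γ : Finset (Fin d → Fin L)) (t : ℝ) (k : Fin d → ℝ) : H →L[ℂ] H :=
  ((Real.sqrt ((L : ℝ) ^ d) : ℂ))⁻¹ •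
    ∑ x : Fin d → Fin L, (starRingEnd ℂ) (wgt d L Γ t k x) • c x

lemma wgt_conj_mul (Γ : Finset (Fin d → Fin L)) (t : ℝ) (k : Fin d → ℝ)
    (x : Fin d → Fin L) :
    (starRingEnd ℂ) (wgt d L Γ t k x) * wgt d L Γ t k x =
      ((Real.exp (2 * t * (if x ∈ Γ then (1:ℝ) else 0)) : ℝ) : ℂ) := by
  unfold wgt
  rw [← Complex.exp_conj, ← Complex.exp_add, Complex.ofReal_exp]
  congr 1
  rw [map_add, map_mul, Complex.conj_I, Complex.conj_ofReal, Complex.conj_ofReal]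
  push_cast
  ring

variable (c cd : (Fin d → Fin L) → (H →L[ℂ] H))

lemma star_c (hadj : ∀ x, cd x = ContinuousLinearMap.adjoint (c x)) (x : Fin d → Fin L) :
    star (c x) = cd x := by
  rw [ContinuousLinearMap.star_eq_adjoint, hadj]

lemma star_cd (hadj : ∀ x, cd x = ContinuousLinearMap.adjoint (c x)) (x : Fin d → Fin L) :
    star (cd x) = c x := by
  rw [← star_c c cd hadj, star_star]

lemma cdcd (hadj : ∀ x, cd x = ContinuousLinearMap.adjoint (c x))
    (hcc : ∀ x y, c x * c y + c y * c x = 0) (x y : Fin d → Fin L) :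
    cd x * cd y + cd y * cd x = 0 := by
  have := congrArg star (hcc y x)
  simpa [star_add, star_mul, star_c c cd hadj, add_comm] using this

lemma N_mul_cd (hadj : ∀ x, cd x = ContinuousLinearMap.adjoint (c x))
    (hcc : ∀ x y, c x * c y + c y * c x = 0)
    (hccd : ∀ x y, c x * cd y + cd y * c x = if x = y then (1 : H →L[ℂ] H) else 0)
    (Γ : Finset (Fin d → Fin L)) (y : Fin d → Fin L) :
    (∑ x ∈ Γ, cd x * c x) * cd y =
      cd y * (∑ x ∈ Γ, cd x * c x) + (if y ∈ Γ then (1:ℂ) else 0) • cd y := by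
  rw [Finset.sum_mul]
  have hterm : ∀ x, cd x * c x * cd y =
      (if x = y then (1:ℂ) else 0) • cd y + cd y * (cd x * c x) := by
    intro x
    have hxy : c x * cd y = (if x = y then (1 : H →L[ℂ] H) else 0) - cd y * c x :=
      eq_sub_of_add_eq (hccd x y)
    have hdd : cd x * cd y = -(cd y * cd x) :=
      eq_neg_of_add_eq_zero_left (cdcd c cd hadj hcc x y)
    calc cd x * c x * cd y = cd x * (c x * cd y) := by rw [mul_assoc]
      _ = cd x * ((if x = y then (1 : H →L[ℂ] H) else 0) - cd y * c x) := by rw [hxy]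
      _ = (if x = y then cd x else 0) - cd x * cd y * c x := by
          rw [mul_sub, mul_ite, mul_one, mul_zero, mul_assoc]
      _ = (if x = y then cd x else 0) + cd y * (cd x * c x) := by
          rw [hdd]; rw [sub_eq_add_neg, neg_mul, neg_neg, mul_assoc]
      _ = (if x = y then (1:ℂ) else 0) • cd y + cd y * (cd x * c x) := by
          congr 1
          split_ifs with h
          · subst h; simp
          · simp
  simp_rw [hterm]
  rw [Finset.sum_add_distrib, ← Finset.mul_sum, ← Finset.sum_smul,
    Finset.sum_ite_eq' Γ y (fun _ => (1:ℂ))]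
  rw [add_comm]

lemma exp_mul_adag (hadj : ∀ x, cd x = ContinuousLinearMap.adjoint (c x))
    (hcc : ∀ x y, c x * c y + c y * c x = 0)
    (hccd : ∀ x y, c x * cd y + cd y * c x = if x = y then (1 : H →L[ℂ] H) else 0)
    (Γ : Finset (Fin d → Fin L)) (t : ℝ) (k : Fin d → ℝ) :
    NormedSpace.exp (((t:ℝ) : ℂ) • ∑ x ∈ Γ, cd x * c x) * adagL d L cd k =
      bdagL d L cd Γ t k * NormedSpace.exp (((t:ℝ) : ℂ) • ∑ x ∈ Γ, cd x * c x) := by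
  set Nop : H →L[ℂ] H := ∑ x ∈ Γ, cd x * c x with hNop
  set A : H →L[ℂ] H := ((t:ℝ) : ℂ) • Nop with hA
  set E := NormedSpace.exp A with hE
  have hconj : ∀ y, E * cd y =
      Complex.exp (((t * (if y ∈ Γ then (1:ℝ) else 0) : ℝ)) : ℂ) • (cd y * E) := by
    intro y
    apply exp_conj_shift
    have h1 := N_mul_cd c cd hadj hcc hccd Γ y
    have hs : (((t * (if y ∈ Γ then (1:ℝ) else 0) : ℝ)) : ℂ) =
        ((t:ℝ) : ℂ) * (if y ∈ Γ then (1:ℂ) else 0) := by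
      split_ifs <;> push_cast <;> ring
    rw [hs, hA, smul_mul_assoc, h1, mul_add, mul_smul_comm, mul_smul_comm, mul_one]
    module
  rw [adagL, bdagL, mul_smul_comm, smul_mul_assoc, Finset.mul_sum, Finset.sum_mul]
  congr 1
  refine Finset.sum_congr rfl fun x _ => ?_
  rw [mul_smul_comm, hconj x, smul_smul, smul_mul_assoc, wgt, ← Complex.exp_add]

lemma adjoint_bL (hadj : ∀ x, cd x = ContinuousLinearMap.adjoint (c x))
    (Γ : Finset (Fin d → Fin L)) (t : ℝ) (k : Fin d → ℝ) :
    ContinuousLinearMap.adjoint (bL d L c Γ t k) = bdagL d L cd Γ t k := by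
  rw [← ContinuousLinearMap.star_eq_adjoint, bL, bdagL, star_smul, star_sum]
  congr 1
  · simp [Complex.star_def, map_inv₀, Complex.conj_ofReal]
  · refine Finset.sum_congr rfl fun x _ => ?_
    rw [star_smul, star_c c cd hadj, Complex.star_def, Complex.conj_conj]

lemma anticomm_b (hccd : ∀ x y, c x * cd y + cd y * c x = if x = y then (1 : H →L[ℂ] H) else 0)
    (hL : 0 < L) (Γ : Finset (Fin d → Fin L)) (t : ℝ) (k : Fin d → ℝ) :
    bL d L c Γ t k * bdagL d L cd Γ t k + bdagL d L cd Γ t k * bL d L c Γ t k =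
      ((((Γ.card : ℝ) / (L : ℝ) ^ d) * Real.exp (2*t) +
        (1 - (Γ.card : ℝ) / (L : ℝ) ^ d) : ℝ) : ℂ) • 1 := by
  have hLd : (0:ℝ) < (L : ℝ) ^ d := by positivity
  set α : ℂ := ((Real.sqrt ((L : ℝ) ^ d) : ℝ) : ℂ) with hα
  have expand : ∀ (u v : (Fin d → Fin L) → ℂ)
      (S T : (Fin d → Fin L) → (H →L[ℂ] H)),
      (α⁻¹ • ∑ x : Fin d → Fin L, u x • S x) * (α⁻¹ • ∑ y : Fin d → Fin L, v y • T y) =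
        (α⁻¹ * α⁻¹) • ∑ x : Fin d → Fin L, ∑ y : Fin d → Fin L,
          (u x * v y) • (S x * T y) := by
    intro u v S T
    rw [smul_mul_assoc, mul_smul_comm, smul_smul, Finset.sum_mul_sum]
    congr 1
    refine Finset.sum_congr rfl fun x _ => Finset.sum_congr rfl fun y _ => ?_
    rw [smul_mul_assoc, mul_smul_comm, smul_smul]
  rw [bL, bdagL, expand, expand, ← smul_add]
  have hcore : (∑ x : Fin d → Fin L, ∑ y : Fin d → Fin L,
        ((starRingEnd ℂ) (wgt d L Γ t k x) * wgt d L Γ t k y) • (c x * cd y) +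
      ∑ x : Fin d → Fin L, ∑ y : Fin d → Fin L, (wgt d L Γ t k x * (starRingEnd ℂ) (wgt d L Γ t k y)) • (cd x * c y))
      = ((∑ x : Fin d → Fin L,
          Real.exp (2 * t * (if x ∈ Γ then (1:ℝ) else 0)) : ℝ) : ℂ) • 1 := by
    have hswap : ∑ x : Fin d → Fin L, ∑ y : Fin d → Fin L,
        (wgt d L Γ t k x * (starRingEnd ℂ) (wgt d L Γ t k y)) • (cd x * c y) =
        ∑ x : Fin d → Fin L, ∑ y : Fin d → Fin L,
        ((starRingEnd ℂ) (wgt d L Γ t k x) * wgt d L Γ t k y) • (cd y * c x) := by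
      rw [Finset.sum_comm]
      exact Finset.sum_congr rfl fun x _ => Finset.sum_congr rfl fun y _ => by
        rw [mul_comm]
    rw [hswap, ← Finset.sum_add_distrib]
    have : ∀ x : Fin d → Fin L, (∑ y : Fin d → Fin L,
        ((starRingEnd ℂ) (wgt d L Γ t k x) * wgt d L Γ t k y) • (c x * cd y) +
        ∑ y : Fin d → Fin L, ((starRingEnd ℂ) (wgt d L Γ t k x) * wgt d L Γ t k y) • (cd y * c x))
        = ((Real.exp (2 * t * (if x ∈ Γ then (1:ℝ) else 0)) : ℝ) : ℂ) • 1 := by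
      intro x
      rw [← Finset.sum_add_distrib]
      have h1 : ∀ y, ((starRingEnd ℂ) (wgt d L Γ t k x) * wgt d L Γ t k y) • (c x * cd y) +
          ((starRingEnd ℂ) (wgt d L Γ t k x) * wgt d L Γ t k y) • (cd y * c x) =
          if x = y then ((starRingEnd ℂ) (wgt d L Γ t k x) * wgt d L Γ t k y) • (1 : H →L[ℂ] H) else 0 := by
        intro y
        rw [← smul_add, hccd x y]
        split_ifs <;> simp
      simp_rw [h1]
      rw [Finset.sum_ite_eq Finset.univ x
        (fun y => ((starRingEnd ℂ) (wgt d L Γ t k x) * wgt d L Γ t k y) • (1 : H →L[ℂ] H))]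
      simp [wgt_conj_mul]
    simp_rw [this]
    rw [← Finset.sum_smul]
    congr 1
    push_cast
    rfl
  rw [hcore, smul_smul]
  congr 1
  have hαα : α⁻¹ * α⁻¹ = ((((L : ℝ) ^ d)⁻¹ : ℝ) : ℂ) := by
    rw [hα, ← mul_inv, ← Complex.ofReal_mul, Real.mul_self_sqrt hLd.le, Complex.ofReal_inv]
  have hsum : (∑ x : Fin d → Fin L,
      Real.exp (2 * t * (if x ∈ Γ then (1:ℝ) else 0)) : ℝ)
      = (Γ.card : ℝ) * (Real.exp (2*t) - 1) + (L : ℝ) ^ d := by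
    have h2 : ∀ x : Fin d → Fin L,
        Real.exp (2 * t * (if x ∈ Γ then (1:ℝ) else 0)) =
        (if x ∈ Γ then (Real.exp (2*t) - 1) else 0) + 1 := by
      intro x
      split_ifs <;> simp
    simp_rw [h2]
    rw [Finset.sum_add_distrib, Finset.sum_ite_mem, Finset.univ_inter, Finset.sum_const,
      Finset.sum_const]
    simp [Fintype.card_fun]
  rw [hαα, hsum, ← Complex.ofReal_mul]
  congr 1
  field_simp
  ring

lemma bdag_bound (hadj : ∀ x, cd x = ContinuousLinearMap.adjoint (c x))
    (hccd : ∀ x y, c x * cd y + cd y * c x = if x = y then (1 : H →L[ℂ] H) else 0)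
    (hL : 0 < L) (Γ : Finset (Fin d → Fin L)) (t : ℝ) (k : Fin d → ℝ) (φ : H) :
    ‖bdagL d L cd Γ t k φ‖ ^ 2 ≤
      (((Γ.card : ℝ) / (L : ℝ) ^ d) * Real.exp (2*t) +
        (1 - (Γ.card : ℝ) / (L : ℝ) ^ d)) * ‖φ‖ ^ 2 := by
  set bd := bdagL d L cd Γ t k with hbd
  set bo := bL d L c Γ t k with hbo
  set Mv : ℝ := ((Γ.card : ℝ) / (L : ℝ) ^ d) * Real.exp (2*t) +
      (1 - (Γ.card : ℝ) / (L : ℝ) ^ d) with hMv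
  have h1 : ContinuousLinearMap.adjoint bo = bd := adjoint_bL c cd hadj Γ t k
  have h2 : ContinuousLinearMap.adjoint bd = bo := by
    rw [← h1, ContinuousLinearMap.adjoint_adjoint]
  have hA := anticomm_b c cd hccd hL Γ t k
  have h3 : bo (bd φ) = ((Mv : ℝ) : ℂ) • φ - bd (bo φ) := by
    have h4 := congrArg (fun T : H →L[ℂ] H => T φ) hA
    simp only [ContinuousLinearMap.add_apply, ContinuousLinearMap.mul_apply,
      ContinuousLinearMap.smul_apply, ContinuousLinearMap.one_apply] at h4
    rw [← hMv] at h4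
    exact eq_sub_of_add_eq h4
  have e1 : ⟪bd φ, bd φ⟫_ℂ = ((Mv : ℝ) : ℂ) * ⟪φ, φ⟫_ℂ - ⟪bo φ, bo φ⟫_ℂ := by
    calc ⟪bd φ, bd φ⟫_ℂ = ⟪φ, bo (bd φ)⟫_ℂ := by
          rw [← h2, ContinuousLinearMap.adjoint_inner_right]
      _ = ((Mv : ℝ) : ℂ) * ⟪φ, φ⟫_ℂ - ⟪φ, bd (bo φ)⟫_ℂ := by
          rw [h3, inner_sub_right, inner_smul_right]
      _ = ((Mv : ℝ) : ℂ) * ⟪φ, φ⟫_ℂ - ⟪bo φ, bo φ⟫_ℂ := by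
          rw [← h1, ContinuousLinearMap.adjoint_inner_right]
  rw [inner_self_eq_norm_sq_to_K, inner_self_eq_norm_sq_to_K,
    inner_self_eq_norm_sq_to_K] at e1
  have e2 : ‖bd φ‖ ^ 2 = Mv * ‖φ‖ ^ 2 - ‖bo φ‖ ^ 2 := by
    have e2' : ((‖bd φ‖ ^ 2 : ℝ) : ℂ) = ((Mv * ‖φ‖ ^ 2 - ‖bo φ‖ ^ 2 : ℝ) : ℂ) := by
      push_cast; exact e1
    exact_mod_cast e2'
  nlinarith [sq_nonneg ‖bo φ‖]

end Fermi

/-- Exponential moment bound for the free Fermi gas eigenstate: for any `λ ∈ (0,1]`,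
`⟨Ψ_k, e^{λ N_Γ} Ψ_k⟩ ≤ (μ e^λ + (1−μ))^N` with `μ = |Γ|/|Λ|`. -/
theorem exp_moment_bound (d L N : ℕ) (hL : 0 < L)
    {H : Type*} [NormedAddCommGroup H] [InnerProductSpace ℂ H] [CompleteSpace H]
    (c cd : (Fin d → Fin L) → (H →L[ℂ] H))
    (hadj : ∀ x, cd x = ContinuousLinearMap.adjoint (c x))
    (hcc : ∀ x y, c x * c y + c y * c x = 0)
    (hccd : ∀ x y, c x * cd y + cd y * c x = if x = y then (1 : H →L[ℂ] H) else 0)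
    (vac : H) (hvac : ‖vac‖ = 1) (hvac0 : ∀ x, c x vac = 0)
    (k : Fin N → (Fin d → ℝ)) (hk : Function.Injective k)
    (hkK : ∀ j, inMomentumLattice d L (k j))
    (Γ : Finset (Fin d → Fin L)) (lam : ℝ) (hlam : lam ∈ Set.Ioc (0:ℝ) 1) :
    (⟪(List.ofFn fun j => adagL d L cd (k j)).prod vac,
        (NormedSpace.exp ((lam : ℂ) • ∑ x ∈ Γ, cd x * c x))
          ((List.ofFn fun j => adagL d L cd (k j)).prod vac)⟫_ℂ).re ≤
      (((Γ.card : ℝ) / (L : ℝ) ^ d) * Real.exp lam +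
        (1 - (Γ.card : ℝ) / (L : ℝ) ^ d)) ^ N := by
  set t : ℝ := lam / 2 with ht
  set Nop : H →L[ℂ] H := ∑ x ∈ Γ, cd x * c x with hNop
  set S := NormedSpace.exp (((t : ℝ) : ℂ) • Nop) with hS
  set Ψ := (List.ofFn fun j => adagL d L cd (k j)).prod vac with hΨ
  set M : ℝ := ((Γ.card : ℝ) / (L : ℝ) ^ d) * Real.exp lam +
      (1 - (Γ.card : ℝ) / (L : ℝ) ^ d) with hM
  have hLd : (0:ℝ) < (L : ℝ) ^ d := by positivity
  have hμ1 : (Γ.card : ℝ) ≤ (L : ℝ) ^ d := by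
    have h := Finset.card_le_univ (α := Fin d → Fin L) Γ
    have : (Fintype.card (Fin d → Fin L) : ℝ) = (L : ℝ) ^ d := by
      simp [Fintype.card_fun]
    calc (Γ.card : ℝ) ≤ (Fintype.card (Fin d → Fin L) : ℝ) := by exact_mod_cast h
      _ = (L : ℝ) ^ d := this
  have hM0 : 0 ≤ M := by
    have h1 : 0 ≤ (Γ.card : ℝ) / (L : ℝ) ^ d := by positivity
    have h2 : (Γ.card : ℝ) / (L : ℝ) ^ d ≤ 1 := by
      rw [div_le_one hLd]; exact hμ1
    have h3 := Real.exp_pos lam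
    rw [hM]
    nlinarith
  have h2t : Real.exp (2 * t) = Real.exp lam := by rw [ht]; congr 1; ring
  have hstarN : star Nop = Nop := by
    rw [hNop, star_sum]
    refine Finset.sum_congr rfl fun x _ => ?_
    rw [star_mul, star_c c cd hadj, star_cd c cd hadj]
  have hstarS : star S = S := by
    rw [hS, NormedSpace.star_exp, star_smul, hstarN, Complex.star_def,
      Complex.conj_ofReal]
  have hadjS : ContinuousLinearMap.adjoint S = S := by
    rw [← ContinuousLinearMap.star_eq_adjoint, hstarS]
  have hSS : NormedSpace.exp ((lam : ℂ) • Nop) = S * S := by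
    have hsplit : (lam : ℂ) • Nop = ((t : ℝ) : ℂ) • Nop + ((t : ℝ) : ℂ) • Nop := by
      rw [← add_smul]
      congr 1
      rw [ht]; push_cast; ring
    rw [hsplit, NormedSpace.exp_add_of_commute_of_mem_ball (𝕂 := ℂ) (Commute.refl _)
      ((NormedSpace.expSeries_radius_eq_top ℂ (H →L[ℂ] H)).symm ▸ edist_lt_top _ _)
      ((NormedSpace.expSeries_radius_eq_top ℂ (H →L[ℂ] H)).symm ▸ edist_lt_top _ _), hS]
  have hSvac : S vac = vac := by
    rw [hS]
    apply exp_apply_eq_self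
    have hN : Nop vac = 0 := by
      rw [hNop, ContinuousLinearMap.sum_apply]
      refine Finset.sum_eq_zero fun x _ => ?_
      rw [ContinuousLinearMap.mul_apply, hvac0, map_zero]
    rw [ContinuousLinearMap.smul_apply, hN, smul_zero]
  have hconj := exp_mul_adag c cd hadj hcc hccd Γ t
  have hSΨ : S Ψ = (List.ofFn fun j => bdagL d L cd Γ t (k j)).prod vac := by
    rw [hΨ, ← ContinuousLinearMap.mul_apply, hS,
      exp_conj_ofFn _ _ _ (fun j => hconj (k j)),
      ContinuousLinearMap.mul_apply, ← hS, hSvac]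
  have hinner : ⟪Ψ, NormedSpace.exp ((lam : ℂ) • Nop) Ψ⟫_ℂ = ((‖S Ψ‖ : ℝ) : ℂ) ^ 2 := by
    rw [hSS, ContinuousLinearMap.mul_apply, ← ContinuousLinearMap.adjoint_inner_left,
      hadjS, inner_self_eq_norm_sq_to_K]
    norm_cast
  rw [hinner, ← Complex.ofReal_pow, Complex.ofReal_re, hSΨ]
  have hlistb : ∀ b ∈ (List.ofFn fun j => bdagL d L cd Γ t (k j)), ∀ φ : H,
      ‖b φ‖ ^ 2 ≤ M * ‖φ‖ ^ 2 := by
    intro b hb φ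
    obtain ⟨j, rfl⟩ := List.mem_ofFn.1 hb
    have := bdag_bound c cd hadj hccd hL Γ t (k j) φ
    rwa [h2t, ← hM] at this
  have hfin := prod_norm_sq_le hM0 _ hlistb vac
  rw [List.length_ofFn, hvac] at hfin
  simpa using hfin
end
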